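/- Let φ be differentiable with γ ≤ φ'(z) ≤ 1 for all z, γ ∈ (0,1]. Let x_1,…,x_n ∈ ℝ^d with min_i‖x_i‖² ≥ 3·n·max_{i≠j}|⟨x_i,x_j⟩|, y_i ∈ {±1}, R = max_i‖x_i‖/min_i‖x_i‖. Let f(x;W) = ∑_{j=1}^m a_j φ(⟨w_j,x⟩) with a_j ∈ {±1/√m}, and let L̂(W) = (1/n)∑_i ℓ(y_i f(x_i;W)) for a differentiable decreasing loss ℓ. Then ‖∇_W L̂(W)‖_F ≥ (√2·γ·min_i‖x_i‖)/(3R√n) · Ĝ(W), where Ĝ(W) = (1/n)∑_i (−ℓ'(y_i f(x_i;W))) and −ℓ' > 0. -/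

import Mathlib

open Real Finset
open scoped RealInnerProductSpace

set_option maxHeartbeats 1000000 in
/-- Proxy-PL inequality: the Frobenius norm of the gradient of the empirical loss
is lower bounded by a multiple of the empirical sigmoid-type loss `Ĝ`. -/
theorem proxy_PL_inequality {d m n : ℕ} (hm : 0 < m) (hn : 0 < n)
    (γ : ℝ) (hγ0 : 0 < γ) (hγ1 : γ ≤ 1)
    (φ φ' : ℝ → ℝ) (hφ : ∀ z, HasDerivAt φ (φ' z) z)
    (hφ'lb : ∀ z, γ ≤ φ' z) (hφ'ub : ∀ z, φ' z ≤ 1)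
    (ℓ : ℝ → ℝ) (hℓ : Differentiable ℝ ℓ) (hℓ' : ∀ z, deriv ℓ z < 0)
    (x : Fin n → EuclideanSpace ℝ (Fin d)) (y : Fin n → ℝ)
    (hy : ∀ i, y i = 1 ∨ y i = -1)
    (hne : (Finset.univ : Finset (Fin n)).Nonempty)
    (horth : ∀ i j : Fin n, i ≠ j →
      3 * (n : ℝ) * |⟪x i, x j⟫| ≤ Finset.univ.inf' hne (fun k => ‖x k‖ ^ 2))
    (Rmin Rmax R : ℝ)
    (hRmin : Rmin = Finset.univ.inf' hne (fun k => ‖x k‖))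
    (hRmax : Rmax = Finset.univ.sup' hne (fun k => ‖x k‖))
    (hR : R = Rmax / Rmin)
    (a : Fin m → ℝ)
    (ha : ∀ j, a j = 1 / Real.sqrt m ∨ a j = -(1 / Real.sqrt m))
    (W : Fin m → EuclideanSpace ℝ (Fin d))
    (f : EuclideanSpace ℝ (Fin d) → ℝ)
    (hf : ∀ ξ, f ξ = ∑ j, a j * φ ⟪W j, ξ⟫)
    (grad : Fin m → EuclideanSpace ℝ (Fin d))
    (hgrad : ∀ j, grad j =
      ((n : ℝ)⁻¹) • ∑ i, (deriv ℓ (y i * f (x i)) * y i * (a j * φ' ⟪W j, x i⟫)) • x i)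
    (G : ℝ)
    (hG : G = (n : ℝ)⁻¹ * ∑ i, -(deriv ℓ (y i * f (x i)))) :
    Real.sqrt (∑ j, ‖grad j‖ ^ 2)
      ≥ (Real.sqrt 2 * γ * Rmin) / (3 * R * Real.sqrt n) * G := by
  -- trivial case : Rmin = 0
  by_cases hRmin0 : Rmin = 0
  · rw [hRmin0]; simp
  -- Rmin is positive
  have hnpos : (0 : ℝ) < n := by exact_mod_cast hn
  have hmpos : (0 : ℝ) < m := by exact_mod_cast hm
  have hxlb : ∀ k, Rmin ≤ ‖x k‖ := by
    intro k
    rw [hRmin]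
    exact Finset.inf'_le _ (Finset.mem_univ k)
  have hxub : ∀ k, ‖x k‖ ≤ Rmax := by
    intro k
    rw [hRmax]
    exact Finset.le_sup' (fun k => ‖x k‖) (Finset.mem_univ k)
  have hRminnn : 0 ≤ Rmin := by
    obtain ⟨k0, _, hk0⟩ := Finset.exists_mem_eq_inf' hne (fun k => ‖x k‖)
    rw [hRmin, hk0]; exact norm_nonneg _
  have hRminpos : 0 < Rmin := lt_of_le_of_ne hRminnn (Ne.symm hRmin0)
  have hRmaxpos : 0 < Rmax := lt_of_lt_of_le hRminpos ((hxlb (hne.choose)).trans (hxub _))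
  have hy2 : ∀ i, y i * y i = 1 := by
    intro i; rcases hy i with h | h <;> rw [h] <;> ring
  have hyabs : ∀ i, |y i| = 1 := by
    intro i; rcases hy i with h | h <;> rw [h] <;> simp
  -- pairwise inner product bound
  have hinner : ∀ i j : Fin n, i ≠ j → |⟪x i, x j⟫| ≤ Rmin ^ 2 / (3 * n) := by
    intro i j hij
    obtain ⟨k0, _, hk0⟩ := Finset.exists_mem_eq_inf' hne (fun k => ‖x k‖)
    have h1 : 3 * (n : ℝ) * |⟪x i, x j⟫| ≤ Rmin ^ 2 := by
      refine (horth i j hij).trans ?_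
      have := Finset.inf'_le (fun k => ‖x k‖ ^ 2) (Finset.mem_univ k0)
      rw [hRmin, hk0]
      exact this
    rw [le_div_iff₀ (by positivity)]
    linarith [h1]
  -- abbreviations
  set ℓ' : Fin n → ℝ := fun i => deriv ℓ (y i * f (x i)) with hℓ'def
  have hℓ'neg : ∀ i, ℓ' i < 0 := fun i => hℓ' _
  set μ : EuclideanSpace ℝ (Fin d) := ∑ i, y i • x i with hμdef
  set M : ℝ := ‖μ‖ with hMdef
  set T : Fin n → ℝ := fun k => y k * ⟪x k, μ⟫ with hTdef
  set s : Fin n → ℝ := fun i => ∑ j, (a j) ^ 2 * φ' ⟪W j, x i⟫ with hsdef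
  -- a j squared
  have hsqm : Real.sqrt m ^ 2 = (m : ℝ) := Real.sq_sqrt (le_of_lt hmpos)
  have hasq : ∀ j, (a j) ^ 2 = (m : ℝ)⁻¹ := by
    intro j
    rcases ha j with h | h <;> rw [h] <;>
      field_simp <;> rw [hsqm]
  have hasum : ∑ j : Fin m, (a j) ^ 2 = 1 := by
    simp [hasq, Finset.sum_const]
    field_simp
  have hs_lb : ∀ i, γ ≤ s i := by
    intro i
    have : ∑ j : Fin m, (m : ℝ)⁻¹ * γ ≤ s i := by
      apply Finset.sum_le_sum
      intro j _
      rw [hasq j]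
      exact mul_le_mul_of_nonneg_left (hφ'lb _) (by positivity)
    calc γ = ∑ j : Fin m, (m : ℝ)⁻¹ * γ := by
              rw [Finset.sum_const]; simp; field_simp
      _ ≤ s i := this
  -- margin decomposition
  have hTdec : ∀ k, T k = ‖x k‖ ^ 2 + ∑ i ∈ Finset.univ.erase k, y k * y i * ⟪x k, x i⟫ := by
    intro k
    have h1 : T k = ∑ i, y k * y i * ⟪x k, x i⟫ := by
      simp only [hTdef, hμdef, inner_sum, inner_smul_right, Finset.mul_sum]
      exact Finset.sum_congr rfl fun i _ => by ring
    rw [h1, ← Finset.add_sum_erase _ _ (Finset.mem_univ k)]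
    congr 1
    rw [hy2 k, one_mul, real_inner_self_eq_norm_sq]
  have hEbound : ∀ k, |∑ i ∈ Finset.univ.erase k, y k * y i * ⟪x k, x i⟫| ≤ Rmin ^ 2 / 3 := by
    intro k
    calc |∑ i ∈ Finset.univ.erase k, y k * y i * ⟪x k, x i⟫|
        ≤ ∑ i ∈ Finset.univ.erase k, |y k * y i * ⟪x k, x i⟫| :=
          Finset.abs_sum_le_sum_abs _ _
      _ ≤ ∑ i ∈ Finset.univ.erase k, Rmin ^ 2 / (3 * n) := by
          apply Finset.sum_le_sum
          intro i hi
          rw [abs_mul, abs_mul, hyabs, hyabs, one_mul, one_mul]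
          exact hinner k i (Finset.ne_of_mem_erase hi).symm
      _ = (Finset.univ.erase k).card * (Rmin ^ 2 / (3 * n)) := by
          rw [Finset.sum_const, nsmul_eq_mul]
      _ ≤ n * (Rmin ^ 2 / (3 * n)) := by
          apply mul_le_mul_of_nonneg_right _ (by positivity)
          have h := Finset.card_le_card (Finset.erase_subset k (Finset.univ : Finset (Fin n)))
          calc ((Finset.univ.erase k).card : ℝ)
              ≤ ((Finset.univ : Finset (Fin n)).card : ℝ) := by exact_mod_cast h
            _ = n := by simp
      _ = Rmin ^ 2 / 3 := by field_simp
  have hT_lb : ∀ k, 2 / 3 * Rmin ^ 2 ≤ T k := by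
    intro k
    have h1 := hTdec k
    have h2 := (abs_le.mp (hEbound k)).1
    have h3 : Rmin ^ 2 ≤ ‖x k‖ ^ 2 := by
      apply pow_le_pow_left₀ hRminnn (hxlb k)
    linarith
  have hT_ub : ∀ k, T k ≤ 4 / 3 * Rmax ^ 2 := by
    intro k
    have h1 := hTdec k
    have h2 := (abs_le.mp (hEbound k)).2
    have h3 : ‖x k‖ ^ 2 ≤ Rmax ^ 2 := by
      apply pow_le_pow_left₀ (norm_nonneg _) (hxub k)
    have h4 : Rmin ^ 2 ≤ Rmax ^ 2 :=
      pow_le_pow_left₀ hRminnn ((hxlb hne.choose).trans (hxub _)) 2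
    linarith
  have hMsq : M ^ 2 = ∑ k, T k := by
    rw [hMdef, ← real_inner_self_eq_norm_sq, hμdef]
    rw [sum_inner]
    exact Finset.sum_congr rfl fun k _ => by
      rw [real_inner_smul_left]
  have hMsq_lb : (n : ℝ) * (2 / 3 * Rmin ^ 2) ≤ M ^ 2 := by
    rw [hMsq]
    calc (n : ℝ) * (2 / 3 * Rmin ^ 2) = ∑ _k : Fin n, 2 / 3 * Rmin ^ 2 := by
          rw [Finset.sum_const]; simp
      _ ≤ ∑ k, T k := Finset.sum_le_sum fun k _ => hT_lb k
  have hMsq_ub : M ^ 2 ≤ (n : ℝ) * (4 / 3 * Rmax ^ 2) := by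
    rw [hMsq]
    calc ∑ k, T k ≤ ∑ _k : Fin n, 4 / 3 * Rmax ^ 2 := Finset.sum_le_sum fun k _ => hT_ub k
      _ = (n : ℝ) * (4 / 3 * Rmax ^ 2) := by rw [Finset.sum_const]; simp
  have hMpos : 0 < M := by
    have h0 : 0 < M ^ 2 := lt_of_lt_of_le (by positivity) hMsq_lb
    nlinarith [norm_nonneg μ]
  -- the constant c
  set c : ℝ := Real.sqrt 2 * Rmin ^ 2 / (3 * Rmax * Real.sqrt n) with hcdef
  have hcpos : 0 < c := by
    apply div_pos (by positivity) (by positivity)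
  have hcM : c * M ≤ 2 / 3 * Rmin ^ 2 := by
    have hsq : (c * M) ^ 2 ≤ (2 / 3 * Rmin ^ 2) ^ 2 := by
      have h1 : (c * M) ^ 2 = c ^ 2 * M ^ 2 := by ring
      have hc2 : c ^ 2 = 2 * Rmin ^ 4 / (9 * Rmax ^ 2 * n) := by
        rw [hcdef]
        rw [div_pow, mul_pow, mul_pow, mul_pow, Real.sq_sqrt (by norm_num : (0:ℝ) ≤ 2), Real.sq_sqrt hnpos.le]
        ring_nf
      have h2 : c ^ 2 * M ^ 2 ≤ c ^ 2 * ((n : ℝ) * (4 / 3 * Rmax ^ 2)) :=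
        mul_le_mul_of_nonneg_left hMsq_ub (by positivity)
      have h3 : c ^ 2 * ((n : ℝ) * (4 / 3 * Rmax ^ 2)) = 8 / 27 * Rmin ^ 4 := by
        rw [hc2]; field_simp; ring
      nlinarith [sq_nonneg Rmin]
    have h4 : 0 ≤ c * M := by positivity
    have h5 : (0:ℝ) ≤ 2 / 3 * Rmin ^ 2 := by positivity
    calc c * M = Real.sqrt ((c * M) ^ 2) := (Real.sqrt_sq h4).symm
      _ ≤ Real.sqrt ((2 / 3 * Rmin ^ 2) ^ 2) := Real.sqrt_le_sqrt hsq
      _ = 2 / 3 * Rmin ^ 2 := Real.sqrt_sq h5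
  have hcMT : ∀ k, c * M ≤ T k := fun k => hcM.trans (hT_lb k)
  -- the witness vector v
  set v : EuclideanSpace ℝ (Fin d) := ∑ j, a j • grad j with hvdef
  -- inner product of v with μ
  have hvμ : ⟪v, μ⟫ = (n : ℝ)⁻¹ * ∑ i, ℓ' i * s i * T i := by
    rw [hvdef, sum_inner]
    have h1 : ∀ j : Fin m, ⟪a j • grad j, μ⟫
        = ∑ i, (n : ℝ)⁻¹ * (ℓ' i * y i * ((a j) ^ 2 * φ' ⟪W j, x i⟫) * ⟪x i, μ⟫) := by
      intro j
      rw [real_inner_smul_left, hgrad j, real_inner_smul_left, sum_inner, Finset.mul_sum,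
        Finset.mul_sum]
      refine Finset.sum_congr rfl fun i _ => ?_
      rw [real_inner_smul_left]
      simp only [hℓ'def]
      ring
    simp only [h1]
    rw [Finset.sum_comm, Finset.mul_sum]
    refine Finset.sum_congr rfl fun i _ => ?_
    rw [← Finset.mul_sum]
    congr 1
    simp only [hsdef, hTdef, Finset.sum_mul, Finset.mul_sum]
    refine Finset.sum_congr rfl fun j _ => ?_
    ring
  have hGnn : 0 ≤ G := by
    rw [hG]
    apply mul_nonneg (by positivity)
    exact Finset.sum_nonneg fun i _ => by linarith [hℓ' (y i * f (x i))]
  -- step C: lower bound on -⟪v, μ⟫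
  have hstepC : γ * (c * M) * G ≤ -⟪v, μ⟫ := by
    have key : ∑ i, -ℓ' i * (γ * (c * M)) ≤ ∑ i, -(ℓ' i * s i * T i) := by
      apply Finset.sum_le_sum
      intro i _
      have h1 : 0 ≤ -ℓ' i := by linarith [hℓ'neg i]
      have h2 : γ * (c * M) ≤ s i * T i :=
        mul_le_mul (hs_lb i) (hcMT i) (by positivity) (le_trans hγ0.le (hs_lb i))
      calc -ℓ' i * (γ * (c * M)) ≤ -ℓ' i * (s i * T i) := mul_le_mul_of_nonneg_left h2 h1
        _ = -(ℓ' i * s i * T i) := by ring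
    rw [hvμ, hG]
    calc γ * (c * M) * ((n : ℝ)⁻¹ * ∑ i, -deriv ℓ (y i * f (x i)))
        = (n : ℝ)⁻¹ * ∑ i, -ℓ' i * (γ * (c * M)) := by
          simp only [Finset.mul_sum, hℓ'def]
          refine Finset.sum_congr rfl fun i _ => ?_
          ring
      _ ≤ (n : ℝ)⁻¹ * ∑ i, -(ℓ' i * s i * T i) :=
          mul_le_mul_of_nonneg_left key (by positivity)
      _ = -((n : ℝ)⁻¹ * ∑ i, ℓ' i * s i * T i) := by
          rw [Finset.sum_neg_distrib]
          ring
  -- step B : Cauchy-Schwarz in the inner product space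
  have hstepB : -⟪v, μ⟫ ≤ ‖v‖ * M := by
    have h := real_inner_le_norm (-v) μ
    rwa [inner_neg_left, norm_neg] at h
  -- step A : Cauchy-Schwarz for the sum over j
  have hstepA : ‖v‖ ≤ Real.sqrt (∑ j, ‖grad j‖ ^ 2) := by
    calc ‖v‖ ≤ ∑ j, ‖a j • grad j‖ := norm_sum_le _ _
      _ = ∑ j, |a j| * ‖grad j‖ := by
          refine Finset.sum_congr rfl fun j _ => ?_
          rw [norm_smul, Real.norm_eq_abs]
      _ ≤ Real.sqrt (∑ j, |a j| ^ 2) * Real.sqrt (∑ j, ‖grad j‖ ^ 2) :=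
          Real.sum_mul_le_sqrt_mul_sqrt _ _ _
      _ = Real.sqrt (∑ j, ‖grad j‖ ^ 2) := by
          simp only [sq_abs]
          rw [hasum, Real.sqrt_one, one_mul]
  -- combine everything
  have hchain : γ * (c * M) * G ≤ Real.sqrt (∑ j, ‖grad j‖ ^ 2) * M :=
    hstepC.trans (hstepB.trans (mul_le_mul_of_nonneg_right hstepA hMpos.le))
  have hsn : 0 < Real.sqrt n := Real.sqrt_pos.mpr hnpos
  have hRHS : (Real.sqrt 2 * γ * Rmin) / (3 * R * Real.sqrt n) * G = γ * c * G := by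
    rw [hR, hcdef]
    field_simp
    try exact Or.inl trivial
  rw [ge_iff_le, hRHS]
  have hfin : γ * c * G * M ≤ Real.sqrt (∑ j, ‖grad j‖ ^ 2) * M := by nlinarith [hchain]
  exact le_of_mul_le_mul_right hfin hMpos
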